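/- arXiv:1906.04449 — 9 statements merged into one kernel-verified Lean document; each statement's English description precedes it below -/
import Mathlib

section
/- For every real number w ≥ 1 and integer k = 2^ℓ with ℓ ≥ 1, setting w₂ = k^⌊log_k w⌋ and i = ⌊log₂ w⌋, we have w/2 ≤ w₂ · 2^(i mod ℓ) ≤ w. -/
/-- For every real `w ≥ 1` and `k = 2^ℓ` with `ℓ ≥ 1`, setting
`w₂ = k^⌊log_k w⌋` and `i = ⌊log₂ w⌋`, we have `w/2 ≤ w₂ · 2^(i mod ℓ) ≤ w`. -/
theorem stmt_0 (ℓ : ℤ) (hℓ : 1 ≤ ℓ) (k : ℤ) (hk : k = 2 ^ ℓ.toNat) (w : ℝ) (hw : 1 ≤ w) :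
    w / 2 ≤ (k : ℝ) ^ ⌊Real.logb k w⌋ * (2 : ℝ) ^ (⌊Real.logb 2 w⌋ % ℓ) ∧
      (k : ℝ) ^ ⌊Real.logb k w⌋ * (2 : ℝ) ^ (⌊Real.logb 2 w⌋ % ℓ) ≤ w := by
  have hw0 : (0 : ℝ) < w := lt_of_lt_of_le one_pos hw
  set n : ℕ := ℓ.toNat with hn
  have hℓn : (n : ℤ) = ℓ := Int.toNat_of_nonneg (by omega)
  have hn1 : 1 ≤ n := by omega
  have hb : 1 < 2 ^ n := Nat.one_lt_two_pow_iff.mpr (by omega)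
  -- identify the floors with Int.log
  have hfi : ⌊Real.logb 2 w⌋ = Int.log 2 w := by
    have := Real.floor_logb_natCast (b := 2) (r := w) hw0.le
    simpa using this
  have hfk : ⌊Real.logb k w⌋ = Int.log (2 ^ n) w := by
    have := Real.floor_logb_natCast (b := 2 ^ n) (r := w) hw0.le
    rw [hk]
    simpa using this
  set i : ℤ := Int.log 2 w with hi
  have h2i_le : (2 : ℝ) ^ i ≤ w := by
    have := Int.zpow_log_le_self (b := 2) (r := w) one_lt_two hw0
    simpa using this
  have h2i_lt : w < (2 : ℝ) ^ (i + 1) := by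
    have := Int.lt_zpow_succ_log_self (b := 2) one_lt_two w
    simpa using this
  have hemod0 : 0 ≤ i % ℓ := Int.emod_nonneg i (by omega)
  have hemodlt : i % ℓ < ℓ := Int.emod_lt_of_pos i (by omega)
  have hdm : ℓ * (i / ℓ) + i % ℓ = i := Int.mul_ediv_add_emod i ℓ
  have h2 : (1 : ℝ) ≤ 2 := one_le_two
  -- Int.log (2^n) w = i / ℓ
  have hcast : ((2 ^ n : ℕ) : ℝ) = (2 : ℝ) ^ (ℓ : ℤ) := by
    push_cast
    rw [← hℓn, zpow_natCast]
  have hm : Int.log (2 ^ n) w = i / ℓ := by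
    apply le_antisymm
    · have : w < ((2 ^ n : ℕ) : ℝ) ^ (i / ℓ + 1) := by
        rw [hcast, ← zpow_mul]
        refine h2i_lt.trans_le (zpow_le_zpow_right₀ h2 ?_)
        nlinarith [hdm, hemodlt]
      have h := (Int.lt_zpow_iff_log_lt (b := 2 ^ n) hb hw0).mp this
      omega
    · refine (Int.zpow_le_iff_le_log hb hw0).mp ?_
      rw [hcast, ← zpow_mul]
      refine le_trans (zpow_le_zpow_right₀ h2 ?_) h2i_le
      nlinarith [hdm, hemod0]
  -- rewrite the product as 2^i
  have hprod : (k : ℝ) ^ ⌊Real.logb k w⌋ * (2 : ℝ) ^ (⌊Real.logb 2 w⌋ % ℓ) = (2 : ℝ) ^ i := by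
    rw [hfk, hfi, hm]
    have hk' : (k : ℝ) = (2 : ℝ) ^ (ℓ : ℤ) := by rw [hk]; push_cast; rw [← hℓn, zpow_natCast]
    rw [hk', ← zpow_mul, ← zpow_add₀ (two_ne_zero), hdm]
  rw [hprod]
  constructor
  · have : w < (2 : ℝ) ^ i * 2 := by
      have : (2 : ℝ) ^ (i + 1) = (2 : ℝ) ^ i * 2 := by
        rw [zpow_add₀ (two_ne_zero), zpow_one]
      linarith [h2i_lt, this ▸ h2i_lt]
    linarith
  · exact h2i_le
end

section
/- Every k-extendible system is a k-set system: for every subset S of the ground set, the ratio between the sizes of any two inclusion-wise maximal independent subsets of S is at most k. -/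
/-- Every k-extendible system is a k-set system: for every subset `S` of the
ground set, the sizes of any two inclusion-wise maximal independent subsets of `S` differ
by a factor of at most `k`. -/
theorem stmt_2 {α : Type*} [DecidableEq α] (N : Finset α) (I : Finset α → Prop) (k : ℕ)
    (hk : 1 ≤ k) (hempty : I ∅)
    (hdown : ∀ S T : Finset α, T ⊆ N → I T → S ⊆ T → I S)
    (hext : ∀ S T : Finset α, S ⊆ T → T ⊆ N → I S → I T → ∀ u ∈ N, u ∉ T →
      I (insert u S) → ∃ Y ⊆ T \ S, Y.card ≤ k ∧ I (insert u (T \ Y))) :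
    ∀ S ⊆ N, ∀ B₁ B₂ : Finset α, B₁ ⊆ S → B₂ ⊆ S → I B₁ → I B₂ →
      (∀ u ∈ S, u ∉ B₁ → ¬ I (insert u B₁)) →
      (∀ u ∈ S, u ∉ B₂ → ¬ I (insert u B₂)) →
      B₁.card ≤ k * B₂.card := by
  intro S hS B₁ B₂ hB₁S hB₂S hI₁ hI₂ hmax₁ hmax₂
  have hB₁N : B₁ ⊆ N := hB₁S.trans hS
  have hB₂N : B₂ ⊆ N := hB₂S.trans hS
  have key : ∀ D : Finset α, D ⊆ B₂ \ B₁ → ∃ T : Finset α, I T ∧ (B₁ ∩ B₂) ∪ D ⊆ T ∧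
      T ⊆ B₁ ∪ D ∧ ((B₁ \ B₂) \ T).card ≤ k * D.card := by
    intro D
    induction D using Finset.induction_on with
    | empty =>
      intro _
      exact ⟨B₁, hI₁, by simp [Finset.union_subset, Finset.inter_subset_left],
        by simp, by simp⟩
    | @insert u D hu ih =>
      intro hsub
      have huB : u ∈ B₂ \ B₁ := hsub (Finset.mem_insert_self u D)
      have huB₂ : u ∈ B₂ := (Finset.mem_sdiff.mp huB).1
      have huB₁ : u ∉ B₁ := (Finset.mem_sdiff.mp huB).2
      have hDsub : D ⊆ B₂ \ B₁ := (Finset.subset_insert u D).trans hsub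
      obtain ⟨T, hIT, hST, hTsub, hcard⟩ := ih hDsub
      have hDB₂ : D ⊆ B₂ := hDsub.trans (Finset.sdiff_subset)
      have hTN : T ⊆ N := hTsub.trans (Finset.union_subset hB₁N (hDB₂.trans hB₂N))
      have huT : u ∉ T := by
        intro h
        rcases Finset.mem_union.mp (hTsub h) with h' | h'
        · exact huB₁ h'
        · exact hu h'
      have hSsub : (B₁ ∩ B₂) ∪ D ⊆ T := hST
      have hIS : I ((B₁ ∩ B₂) ∪ D) := hdown _ T hTN hIT hSsub
      have hinsB₂ : insert u ((B₁ ∩ B₂) ∪ D) ⊆ B₂ := by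
        apply Finset.insert_subset huB₂
        exact Finset.union_subset (Finset.inter_subset_right) hDB₂
      have hins : I (insert u ((B₁ ∩ B₂) ∪ D)) := hdown _ B₂ hB₂N hI₂ hinsB₂
      obtain ⟨Y, hY, hYk, hIT'⟩ := hext _ T hSsub hTN hIS hIT u (hB₂N huB₂) huT hins
      refine ⟨insert u (T \ Y), hIT', ?_, ?_, ?_⟩
      · intro x hx
        rcases Finset.mem_union.mp hx with hx | hx
        · exact Finset.mem_insert_of_mem (Finset.mem_sdiff.mpr
            ⟨hST (Finset.mem_union_left _ hx),
             fun hxy => (Finset.mem_sdiff.mp (hY hxy)).2 (Finset.mem_union_left _ hx)⟩)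
        · rcases Finset.mem_insert.mp hx with rfl | hx
          · exact Finset.mem_insert_self _ _
          · exact Finset.mem_insert_of_mem (Finset.mem_sdiff.mpr
              ⟨hST (Finset.mem_union_right _ hx),
               fun hxy => (Finset.mem_sdiff.mp (hY hxy)).2 (Finset.mem_union_right _ hx)⟩)
      · intro x hx
        rcases Finset.mem_insert.mp hx with rfl | hx
        · exact Finset.mem_union_right _ (Finset.mem_insert_self _ _)
        · rcases Finset.mem_union.mp (hTsub (Finset.mem_sdiff.mp hx).1) with h | h
          · exact Finset.mem_union_left _ h
          · exact Finset.mem_union_right _ (Finset.mem_insert_of_mem h)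
      · have hsub2 : (B₁ \ B₂) \ insert u (T \ Y) ⊆ ((B₁ \ B₂) \ T) ∪ Y := by
          intro x hx
          obtain ⟨hx1, hx2⟩ := Finset.mem_sdiff.mp hx
          by_cases hxT : x ∈ T
          · refine Finset.mem_union_right _ ?_
            by_contra hxY
            exact hx2 (Finset.mem_insert_of_mem (Finset.mem_sdiff.mpr ⟨hxT, hxY⟩))
          · exact Finset.mem_union_left _ (Finset.mem_sdiff.mpr ⟨hx1, hxT⟩)
        calc ((B₁ \ B₂) \ insert u (T \ Y)).card
            ≤ (((B₁ \ B₂) \ T) ∪ Y).card := Finset.card_le_card hsub2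
          _ ≤ ((B₁ \ B₂) \ T).card + Y.card := Finset.card_union_le _ _
          _ ≤ k * D.card + k := Nat.add_le_add hcard hYk
          _ = k * (insert u D).card := by
              rw [Finset.card_insert_of_notMem hu]; ring
  obtain ⟨T, hIT, hST, hTsub, hcard⟩ := key (B₂ \ B₁) (Finset.Subset.refl _)
  have hTBB : T ⊆ B₁ ∪ B₂ := hTsub.trans (by
    apply Finset.union_subset Finset.subset_union_left
    exact Finset.sdiff_subset.trans Finset.subset_union_right)
  have hB₂T : B₂ ⊆ T := by
    intro x hx
    by_cases h : x ∈ B₁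
    · exact hST (Finset.mem_union_left _ (Finset.mem_inter.mpr ⟨h, hx⟩))
    · exact hST (Finset.mem_union_right _ (Finset.mem_sdiff.mpr ⟨hx, h⟩))
  have hTN : T ⊆ N := hTBB.trans (Finset.union_subset hB₁N hB₂N)
  have hT2 : T ⊆ B₂ := by
    intro x hx
    by_contra hxB₂
    have hxS : x ∈ S := (Finset.mem_union.mp (hTBB hx)).elim (fun h => hB₁S h) (fun h => hB₂S h)
    exact hmax₂ x hxS hxB₂ (hdown _ T hTN hIT (Finset.insert_subset hx hB₂T))
  have heq : (B₁ \ B₂) \ T = B₁ \ B₂ := by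
    apply Finset.sdiff_eq_self_of_disjoint
    exact Finset.disjoint_left.mpr fun x hx hxT => (Finset.mem_sdiff.mp hx).2 (hT2 hxT)
  rw [heq] at hcard
  have h1 : B₁.card = (B₁ ∩ B₂).card + (B₁ \ B₂).card :=
    (Finset.card_inter_add_card_sdiff B₁ B₂).symm
  have h2 : B₂.card = (B₁ ∩ B₂).card + (B₂ \ B₁).card := by
    rw [Finset.inter_comm]
    exact (Finset.card_inter_add_card_sdiff B₂ B₁).symm
  calc B₁.card = (B₁ ∩ B₂).card + (B₁ \ B₂).card := h1
    _ ≤ (B₁ ∩ B₂).card + k * (B₂ \ B₁).card := Nat.add_le_add_left hcard _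
    _ ≤ k * (B₁ ∩ B₂).card + k * (B₂ \ B₁).card :=
        Nat.add_le_add_right (Nat.le_mul_of_pos_left _ hk) _
    _ = k * B₂.card := by rw [h2]; ring
end

section
/- In a k-extendible system, if B is an inclusion-wise maximal independent set (a base) and A is any independent set, then k·|B \ A| ≥ |A \ B|. -/
/-- In a k-extendible system, if `B` is an inclusion-wise maximal independent
set (a base) and `A` is any independent set, then `k·|B \ A| ≥ |A \ B|`. -/
theorem stmt_3 {α : Type*} [DecidableEq α] (N : Finset α) (I : Finset α → Prop) (k : ℕ)
    (hempty : I ∅)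
    (hdown : ∀ S T : Finset α, T ⊆ N → I T → S ⊆ T → I S)
    (hext : ∀ S T : Finset α, S ⊆ T → T ⊆ N → I S → I T → ∀ u ∈ N, u ∉ T →
      I (insert u S) → ∃ Y ⊆ T \ S, Y.card ≤ k ∧ I (insert u (T \ Y)))
    (B : Finset α) (hBN : B ⊆ N) (hB : I B)
    (hBmax : ∀ u ∈ N, u ∉ B → ¬ I (insert u B))
    (A : Finset α) (hAN : A ⊆ N) (hA : I A) :
    (A \ B).card ≤ k * (B \ A).card := by
  -- first: if B ⊆ U and U independent ⊆ N then U \ B = ∅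
  have hfull : ∀ U : Finset α, U ⊆ N → I U → B ⊆ U → U \ B = ∅ := by
    intro U hUN hU hBU
    by_contra hne
    obtain ⟨x, hx⟩ := Finset.nonempty_iff_ne_empty.mpr hne
    rw [Finset.mem_sdiff] at hx
    exact hBmax x (hUN hx.1) hx.2
      (hdown _ U hUN hU (Finset.insert_subset hx.1 hBU))
  suffices h : ∀ n (U : Finset α), (B \ U).card ≤ n → U ⊆ N → I U →
      (U \ B).card ≤ k * (B \ U).card from h _ A le_rfl hAN hA
  intro n
  induction n with
  | zero =>
    intro U hcard hUN hU
    have hBU : B ⊆ U := by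
      intro x hx
      by_contra hxU
      have : x ∈ B \ U := Finset.mem_sdiff.mpr ⟨hx, hxU⟩
      have := Finset.card_pos.mpr ⟨x, this⟩
      omega
    rw [hfull U hUN hU hBU]
    simp
  | succ n ih =>
    intro U hcard hUN hU
    by_cases hBU : B ⊆ U
    · rw [hfull U hUN hU hBU]
      simp
    · obtain ⟨b, hbB, hbU⟩ := Finset.not_subset.mp hBU
      have hSsub : B ∩ U ⊆ U := Finset.inter_subset_right
      have hSI : I (B ∩ U) := hdown _ B hBN hB Finset.inter_subset_left
      have hinsI : I (insert b (B ∩ U)) :=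
        hdown _ B hBN hB (Finset.insert_subset hbB Finset.inter_subset_left)
      obtain ⟨Y, hYsub, hYk, hU'⟩ :=
        hext (B ∩ U) U hSsub hUN hSI hU b (hBN hbB) hbU hinsI
      set U' : Finset α := insert b (U \ Y) with hU'def
      have hYU : Y ⊆ U \ B := by
        intro y hy
        have := hYsub hy
        rw [Finset.mem_sdiff, Finset.mem_inter] at this
        exact Finset.mem_sdiff.mpr ⟨this.1, fun hyB => this.2 ⟨hyB, this.1⟩⟩
      have hU'N : U' ⊆ N :=
        Finset.insert_subset (hBN hbB) ((Finset.sdiff_subset).trans hUN)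
      -- B \ U' ⊆ (B \ U).erase b
      have hBU' : B \ U' ⊆ (B \ U).erase b := by
        intro x hx
        rw [Finset.mem_sdiff, hU'def, Finset.mem_insert, Finset.mem_sdiff] at hx
        push_neg at hx
        obtain ⟨hxB, hxb, hxUY⟩ := hx
        have hxY : x ∉ Y := fun hxY => (Finset.mem_sdiff.mp (hYU hxY)).2 hxB
        have hxU : x ∉ U := fun hxU => hxY (hxUY hxU)
        exact Finset.mem_erase.mpr ⟨hxb, Finset.mem_sdiff.mpr ⟨hxB, hxU⟩⟩
      have hbBU : b ∈ B \ U := Finset.mem_sdiff.mpr ⟨hbB, hbU⟩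
      have hcard' : (B \ U').card ≤ n := by
        have h1 := Finset.card_le_card hBU'
        have h2 : ((B \ U).erase b).card = (B \ U).card - 1 :=
          Finset.card_erase_of_mem hbBU
        have h3 : 1 ≤ (B \ U).card := Finset.card_pos.mpr ⟨b, hbBU⟩
        omega
      have hih := ih U' hcard' hU'N hU'
      -- U \ B ⊆ (U' \ B) ∪ Y
      have hcover : U \ B ⊆ (U' \ B) ∪ Y := by
        intro x hx
        rw [Finset.mem_sdiff] at hx
        rw [Finset.mem_union]
        by_cases hxY : x ∈ Y
        · exact Or.inr hxY
        · exact Or.inl (Finset.mem_sdiff.mpr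
            ⟨Finset.mem_insert_of_mem (Finset.mem_sdiff.mpr ⟨hx.1, hxY⟩), hx.2⟩)
      have hc1 : (U \ B).card ≤ (U' \ B).card + Y.card :=
        (Finset.card_le_card hcover).trans (Finset.card_union_le _ _)
      have hc2 : (B \ U').card + 1 ≤ (B \ U).card := by
        have h1 := Finset.card_le_card hBU'
        have h2 : ((B \ U).erase b).card = (B \ U).card - 1 :=
          Finset.card_erase_of_mem hbBU
        have h3 : 1 ≤ (B \ U).card := Finset.card_pos.mpr ⟨b, hbBU⟩
        omega
      calc (U \ B).card ≤ (U' \ B).card + Y.card := hc1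
        _ ≤ k * (B \ U').card + k := by omega
        _ = k * ((B \ U').card + 1) := by ring
        _ ≤ k * (B \ U).card := Nat.mul_le_mul_left k hc2
end

section
/- In a k-extendible system, given a base B and an independent set A with elements of B \ A enumerated as x₁,…,x_m, there exists a sequence of independent sets A₀ = A, A₁, …, A_m such that for each i, A_i = A_{i-1} \ Y_i + x_i for some Y_i ⊆ A_{i-1} \ B with |Y_i| ≤ k, and A_m = B. -/
/-- In a k-extendible system, given a base `B` and an independent set `A`
with the elements of `B \ A` enumerated as `x 0, …, x (m-1)`, there exists a sequence of
independent sets `A₀ = A, A₁, …, A_m` such that for each `i < m`,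
`A_{i+1} = A_i \ Y_{i+1} + x i` for some `Y_{i+1} ⊆ A_i \ B` with `|Y_{i+1}| ≤ k`,
and `A_m = B`. -/
theorem stmt_5 {α : Type*} [DecidableEq α] (N : Finset α) (I : Finset α → Prop) (k : ℕ)
    (hempty : I ∅)
    (hdown : ∀ S T : Finset α, T ⊆ N → I T → S ⊆ T → I S)
    (hext : ∀ S T : Finset α, S ⊆ T → T ⊆ N → I S → I T → ∀ u ∈ N, u ∉ T →
      I (insert u S) → ∃ Y ⊆ T \ S, Y.card ≤ k ∧ I (insert u (T \ Y)))
    (B : Finset α) (hBN : B ⊆ N) (hB : I B)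
    (hBmax : ∀ u ∈ N, u ∉ B → ¬ I (insert u B))
    (A : Finset α) (hAN : A ⊆ N) (hA : I A)
    (m : ℕ) (hm : m = (B \ A).card) (x : ℕ → α)
    (hx : ∀ i < m, x i ∈ B \ A) (hxinj : Set.InjOn x (Set.Iio m)) :
    ∃ Aseq : ℕ → Finset α, Aseq 0 = A ∧ Aseq m = B ∧
      (∀ i ≤ m, I (Aseq i)) ∧
      ∀ i < m, ∃ Y ⊆ Aseq i \ B, Y.card ≤ k ∧
        Aseq (i + 1) = insert (x i) (Aseq i \ Y) := by
  -- Main induction: build the sequence up to step `i`.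
  have key : ∀ i ≤ m, ∃ Aseq : ℕ → Finset α, Aseq 0 = A ∧
      (∀ j ≤ i, I (Aseq j)) ∧ (∀ j ≤ i, Aseq j ⊆ N) ∧
      (∀ j ≤ i, Aseq j ∩ B = (A ∩ B) ∪ (Finset.range j).image x) ∧
      (∀ j < i, ∃ Y ⊆ Aseq j \ B, Y.card ≤ k ∧
        Aseq (j + 1) = insert (x j) (Aseq j \ Y)) := by
    intro i
    induction i with
    | zero =>
      intro _
      refine ⟨fun _ => A, rfl, ?_, ?_, ?_, ?_⟩
      · intro j hj; exact hA
      · intro j hj; exact hAN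
      · intro j hj
        have hj0 : j = 0 := Nat.le_zero.mp hj
        subst hj0
        simp
      · intro j hj
        exact absurd hj (Nat.not_lt_zero j)
    | succ i ih =>
      intro hi
      obtain ⟨Aseq, h0, hI, hN, hInt, hstep⟩ := ih (by omega)
      have him : i < m := by omega
      have hxiB : x i ∈ B := (Finset.mem_sdiff.mp (hx i him)).1
      have hxiA : x i ∉ A := (Finset.mem_sdiff.mp (hx i him)).2
      -- x i ∉ Aseq i
      have hxnot : x i ∉ Aseq i := by
        intro hmem
        have : x i ∈ Aseq i ∩ B := Finset.mem_inter.mpr ⟨hmem, hxiB⟩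
        rw [hInt i le_rfl] at this
        rcases Finset.mem_union.mp this with h | h
        · exact hxiA (Finset.mem_inter.mp h).1
        · obtain ⟨j, hj, hje⟩ := Finset.mem_image.mp h
          have hjm : j < m := lt_of_lt_of_le (Finset.mem_range.mp hj) (le_of_lt him)
          have hji : j = i := hxinj (Set.mem_Iio.mpr hjm) (Set.mem_Iio.mpr him) hje
          have := Finset.mem_range.mp hj
          omega
      -- apply extension with S = Aseq i ∩ B, T = Aseq i, u = x i
      have hSsub : Aseq i ∩ B ⊆ Aseq i := Finset.inter_subset_left
      have hIS : I (Aseq i ∩ B) := hdown _ _ (hN i le_rfl) (hI i le_rfl) hSsub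
      have hins : I (insert (x i) (Aseq i ∩ B)) := by
        apply hdown _ B hBN hB
        intro a ha
        rcases Finset.mem_insert.mp ha with h | h
        · rwa [h]
        · exact (Finset.mem_inter.mp h).2
      obtain ⟨Y, hY, hYk, hYI⟩ := hext (Aseq i ∩ B) (Aseq i) hSsub (hN i le_rfl)
        hIS (hI i le_rfl) (x i) (hBN hxiB) hxnot hins
      have hYsub : Y ⊆ Aseq i \ B := by
        intro a ha
        have := hY ha
        rw [Finset.mem_sdiff] at this ⊢
        refine ⟨this.1, fun hb => this.2 (Finset.mem_inter.mpr ⟨this.1, hb⟩)⟩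
      set Anew := insert (x i) (Aseq i \ Y) with hAnew
      refine ⟨fun j => if j ≤ i then Aseq j else Anew, ?_, ?_, ?_, ?_, ?_⟩
      · simp [h0]
      · intro j hj
        by_cases h : j ≤ i
        · simpa [h] using hI j h
        · simp only [if_neg h]; exact hYI
      · intro j hj
        by_cases h : j ≤ i
        · simpa [h] using hN j h
        · simp only [if_neg h]
          intro a ha
          rcases Finset.mem_insert.mp ha with h' | h'
          · rw [h']; exact hBN hxiB
          · exact hN i le_rfl (Finset.mem_sdiff.mp h').1
      · intro j hj
        by_cases h : j ≤ i
        · simpa [h] using hInt j h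
        · have hji : j = i + 1 := by omega
          subst hji
          simp only [if_neg h]
          have hYB : ∀ a ∈ Y, a ∉ B := fun a ha => (Finset.mem_sdiff.mp (hYsub ha)).2
          ext a
          simp only [Finset.mem_inter, Finset.mem_insert, Finset.mem_sdiff,
            Finset.mem_union, Finset.mem_image, Finset.mem_range, hAnew]
          constructor
          · rintro ⟨h1 | ⟨h1, h2⟩, hb⟩
            · exact Or.inr ⟨i, by omega, h1.symm⟩
            · have : a ∈ Aseq i ∩ B := Finset.mem_inter.mpr ⟨h1, hb⟩
              rw [hInt i le_rfl] at this
              rcases Finset.mem_union.mp this with h' | h'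
              · exact Or.inl (Finset.mem_inter.mp h')
              · obtain ⟨j', hj', hje⟩ := Finset.mem_image.mp h'
                have := Finset.mem_range.mp hj'
                exact Or.inr ⟨j', by omega, hje⟩
          · rintro (⟨h1, h2⟩ | ⟨j', hj', hje⟩)
            · have haB : a ∈ Aseq i ∩ B := by
                rw [hInt i le_rfl]
                exact Finset.mem_union_left _ (Finset.mem_inter.mpr ⟨h1, h2⟩)
              obtain ⟨h1', h2'⟩ := Finset.mem_inter.mp haB
              exact ⟨Or.inr ⟨h1', fun hY' => hYB a hY' h2'⟩, h2'⟩
            · by_cases hji' : j' = i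
              · exact ⟨Or.inl (by rw [← hje, hji']), by rw [← hje, hji']; exact hxiB⟩
              · have hj'i : j' < i := by omega
                have haB : a ∈ Aseq i ∩ B := by
                  rw [hInt i le_rfl]
                  exact Finset.mem_union_right _
                    (Finset.mem_image.mpr ⟨j', Finset.mem_range.mpr hj'i, hje⟩)
                obtain ⟨h1', h2'⟩ := Finset.mem_inter.mp haB
                exact ⟨Or.inr ⟨h1', fun hY' => hYB a hY' h2'⟩, h2'⟩
      · intro j hj
        by_cases h : j < i
        · have h1 : j ≤ i := le_of_lt h
          have h2 : j + 1 ≤ i := h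
          obtain ⟨Y', hY', hYk', heq⟩ := hstep j h
          exact ⟨Y', by simpa [h1] using hY', hYk', by simp [h1, h2, heq]⟩
        · have hji : j = i := by omega
          refine ⟨Y, ?_, hYk, ?_⟩
          · rw [hji]; simpa using hYsub
          · simp only [hji, if_neg (show ¬ i + 1 ≤ i by omega), if_pos le_rfl]; exact hAnew
  obtain ⟨Aseq, h0, hI, hN, hInt, hstep⟩ := key m le_rfl
  -- image x (range m) = B \ A
  have himg : (Finset.range m).image x = B \ A := by
    apply Finset.eq_of_subset_of_card_le
    · intro a ha
      obtain ⟨j, hj, hje⟩ := Finset.mem_image.mp ha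
      rw [← hje]; exact hx j (Finset.mem_range.mp hj)
    · rw [Finset.card_image_of_injOn (fun a ha b hb hab =>
        hxinj (Set.mem_Iio.mpr (Finset.mem_range.mp ha))
          (Set.mem_Iio.mpr (Finset.mem_range.mp hb)) hab)]
      simp [hm]
  -- B ⊆ Aseq m
  have hBsub : B ⊆ Aseq m := by
    intro a ha
    have : a ∈ Aseq m ∩ B := by
      rw [hInt m le_rfl, himg]
      by_cases h : a ∈ A
      · exact Finset.mem_union_left _ (Finset.mem_inter.mpr ⟨h, ha⟩)
      · exact Finset.mem_union_right _ (Finset.mem_sdiff.mpr ⟨ha, h⟩)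
    exact (Finset.mem_inter.mp this).1
  have hfin : Aseq m = B := by
    apply Finset.Subset.antisymm _ hBsub
    intro a ha
    by_contra hab
    refine hBmax a (hN m le_rfl ha) hab ?_
    apply hdown _ (Aseq m) (hN m le_rfl) (hI m le_rfl)
    intro b hb
    rcases Finset.mem_insert.mp hb with h | h
    · rwa [h]
    · exact hBsub h
  exact ⟨Aseq, h0, hfin, hI, hstep⟩
end

section
/- Every intersection of k matroids on a common ground set is a k-extendible system. -/
/-- Every intersection of `k` matroids on a common ground set is a
`k`-extendible system. -/
theorem stmt_6 {α : Type*} [DecidableEq α] (N : Finset α) (k : ℕ) (hk : 1 ≤ k)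
    (Is : Fin k → Finset α → Prop)
    (hempty : ∀ i, Is i ∅)
    (hdown : ∀ i, ∀ S T : Finset α, T ⊆ N → Is i T → S ⊆ T → Is i S)
    (hexch : ∀ i, ∀ A B : Finset α, A ⊆ N → B ⊆ N → Is i A → Is i B →
      A.card < B.card → ∃ u ∈ B \ A, Is i (insert u A)) :
    ∀ S T : Finset α, S ⊆ T → T ⊆ N → (∀ i, Is i S) → (∀ i, Is i T) →
      ∀ u ∈ N, u ∉ T → (∀ i, Is i (insert u S)) →
        ∃ Y ⊆ T \ S, Y.card ≤ k ∧ ∀ i, Is i (insert u (T \ Y)) := by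
  intro S T hST hTN hS hT u huN huT hSu
  -- for each i, find A' with insert u S ⊆ A' ⊆ insert u T, Is i A', T.card ≤ A'.card
  have key : ∀ i, ∃ Yi ⊆ T \ S, Yi.card ≤ 1 ∧ Is i (insert u (T \ Yi)) := by
    intro i
    have grow : ∀ n : ℕ, ∀ A : Finset α, Is i A → insert u S ⊆ A → A ⊆ insert u T →
        T.card ≤ A.card + n →
        ∃ A', Is i A' ∧ A ⊆ A' ∧ A' ⊆ insert u T ∧ T.card ≤ A'.card := by
      intro n
      induction n with
      | zero => intro A hA h1 h2 h3; exact ⟨A, hA, subset_rfl, h2, by omega⟩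
      | succ n ih =>
        intro A hA h1 h2 h3
        by_cases hc : T.card ≤ A.card
        · exact ⟨A, hA, subset_rfl, h2, hc⟩
        · have hAN : A ⊆ N := h2.trans (Finset.insert_subset huN hTN)
          obtain ⟨v, hv, hvA⟩ := hexch i A T hAN hTN hA (hT i) (by omega)
          have hvT : v ∈ T := (Finset.mem_sdiff.mp hv).1
          have hvnA : v ∉ A := (Finset.mem_sdiff.mp hv).2
          have := ih (insert v A) hvA (h1.trans (Finset.subset_insert _ _))
            (Finset.insert_subset (Finset.mem_insert_of_mem hvT) h2)
            (by rw [Finset.card_insert_of_notMem hvnA]; omega)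
          exact this.imp fun A' ⟨a, b, c, d⟩ =>
            ⟨a, (Finset.subset_insert _ _).trans b, c, d⟩
    obtain ⟨A', hA', hsub1, hsub2, hcard⟩ := grow T.card (insert u S) (hSu i)
      subset_rfl (Finset.insert_subset_insert _ hST) (by omega)
    have huA : u ∈ A' := hsub1 (Finset.mem_insert_self _ _)
    have hA'N : A' ⊆ N := hsub2.trans (Finset.insert_subset huN hTN)
    refine ⟨T \ A', ?_, ?_, ?_⟩
    · intro x hx
      rw [Finset.mem_sdiff] at hx ⊢
      exact ⟨hx.1, fun hxS => hx.2 (hsub1 (Finset.mem_insert_of_mem hxS))⟩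
    · -- card (T \ A') ≤ 1
      have he : A'.erase u ⊆ T := by
        intro x hx
        rcases Finset.mem_erase.mp hx with ⟨hxu, hxA⟩
        rcases Finset.mem_insert.mp (hsub2 hxA) with h | h
        · exact absurd h hxu
        · exact h
      have he2 : A'.erase u ⊆ T ∩ A' := fun x hx =>
        Finset.mem_inter.mpr ⟨he hx, (Finset.mem_erase.mp hx).2⟩
      have h1 : (A'.erase u).card = A'.card - 1 := Finset.card_erase_of_mem huA
      have h2 : (A'.erase u).card ≤ (T ∩ A').card := Finset.card_le_card he2
      have h3 : (T \ A').card + (T ∩ A').card = T.card :=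
        Finset.card_sdiff_add_card_inter T A'
      have h4 : (T ∩ A').card ≤ T.card := Finset.card_le_card (Finset.inter_subset_left)
      have h5 : 1 ≤ A'.card := Finset.card_pos.mpr ⟨u, huA⟩
      omega
    · refine hdown i _ A' hA'N hA' ?_
      intro x hx
      rcases Finset.mem_insert.mp hx with rfl | hx
      · exact huA
      · rw [Finset.mem_sdiff, Finset.mem_sdiff] at hx
        by_contra hxA'
        exact hx.2 ⟨hx.1, hxA'⟩
  choose Yf hYf1 hYf2 hYf3 using key
  refine ⟨Finset.univ.biUnion Yf, ?_, ?_, ?_⟩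
  · exact Finset.biUnion_subset.mpr fun i _ => hYf1 i
  · calc (Finset.univ.biUnion Yf).card ≤ ∑ i, (Yf i).card := Finset.card_biUnion_le
      _ ≤ ∑ _i : Fin k, 1 := Finset.sum_le_sum fun i _ => hYf2 i
      _ = k := by simp
  · intro i
    refine hdown i _ (insert u (T \ Yf i)) ?_ (hYf3 i) ?_
    · exact Finset.insert_subset huN ((Finset.sdiff_subset).trans hTN)
    · apply Finset.insert_subset_insert
      exact Finset.sdiff_subset_sdiff subset_rfl (Finset.subset_biUnion_of_mem Yf (Finset.mem_univ i))
end

section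
/- Every matroid is a 1-extendible system, and every 1-extendible system in which the empty set is independent is a matroid. -/
/-- Every matroid is a 1-extendible system, and every 1-extendible system in
which the empty set is independent is a matroid (i.e., satisfies the exchange axiom). -/
theorem stmt_7 {α : Type*} [DecidableEq α] (I : Finset α → Prop)
    (hempty : I ∅) (hdown : ∀ S T : Finset α, I T → S ⊆ T → I S) :
    ((∀ A B : Finset α, I A → I B → A.card < B.card → ∃ u ∈ B \ A, I (insert u A)) →
      (∀ S T : Finset α, S ⊆ T → I S → I T → ∀ u, u ∉ T → I (insert u S) →
        ∃ Y ⊆ T \ S, Y.card ≤ 1 ∧ I (insert u (T \ Y)))) ∧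
    ((∀ S T : Finset α, S ⊆ T → I S → I T → ∀ u, u ∉ T → I (insert u S) →
        ∃ Y ⊆ T \ S, Y.card ≤ 1 ∧ I (insert u (T \ Y))) →
      (∀ A B : Finset α, I A → I B → A.card < B.card → ∃ u ∈ B \ A, I (insert u A))) := by
  constructor
  · -- matroid → 1-extendible
    intro hex S T hST hS hT u huT huS
    have key : ∀ n A, (T \ A).card ≤ n → I A → u ∈ A → S ⊆ A → A ⊆ insert u T →
        ∃ Y ⊆ T \ S, Y.card ≤ 1 ∧ I (insert u (T \ Y)) := by
      intro n
      induction n with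
      | zero =>
        intro A hc hA huA hSA hAT
        have hTA : T ⊆ A := by
          intro x hx
          by_contra hxA
          have : x ∈ T \ A := Finset.mem_sdiff.mpr ⟨hx, hxA⟩
          have := Finset.card_pos.mpr ⟨x, this⟩
          omega
        have hAeq : A = insert u T := by
          apply Finset.Subset.antisymm hAT
          intro x hx
          rcases Finset.mem_insert.mp hx with h | h
          · exact h ▸ huA
          · exact hTA h
        refine ⟨∅, Finset.empty_subset _, by simp, ?_⟩
        rw [Finset.sdiff_empty, ← hAeq]; exact hA
      | succ n ih =>
        intro A hc hA huA hSA hAT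
        by_cases h : T.card ≤ A.card
        · -- done: take Y = T \ A
          have hTA : T ∩ A = A.erase u := by
            apply Finset.Subset.antisymm
            · intro x hx
              rw [Finset.mem_inter] at hx
              exact Finset.mem_erase.mpr ⟨fun he => huT (he ▸ hx.1), hx.2⟩
            · intro x hx
              rw [Finset.mem_erase] at hx
              rcases Finset.mem_insert.mp (hAT hx.2) with he | hT'
              · exact absurd he hx.1
              · exact Finset.mem_inter.mpr ⟨hT', hx.2⟩
          have hcard : (T \ A).card ≤ 1 := by
            have h1 : (T \ A).card + (T ∩ A).card = T.card :=
              Finset.card_sdiff_add_card_inter T A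
            have h2 : (T ∩ A).card = A.card - 1 := by
              rw [hTA, Finset.card_erase_of_mem huA]
            have h3 : 1 ≤ A.card := Finset.card_pos.mpr ⟨u, huA⟩
            omega
          refine ⟨T \ A, ?_, hcard, ?_⟩
          · exact Finset.sdiff_subset_sdiff le_rfl hSA
          · have : T \ (T \ A) = T ∩ A := Finset.sdiff_sdiff_self_left T A
            rw [this, hTA, Finset.insert_erase huA]
            exact hA
        · push_neg at h
          obtain ⟨v, hv, hvA⟩ := hex A T hA hT h
          rw [Finset.mem_sdiff] at hv
          have hcard' : (T \ insert v A).card ≤ n := by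
            have hsub : T \ insert v A ⊆ (T \ A).erase v := by
              intro x hx
              rw [Finset.mem_sdiff, Finset.mem_insert] at hx
              push_neg at hx
              exact Finset.mem_erase.mpr ⟨hx.2.1, Finset.mem_sdiff.mpr ⟨hx.1, hx.2.2⟩⟩
            have := Finset.card_le_card hsub
            have := Finset.card_erase_of_mem (Finset.mem_sdiff.mpr hv)
            omega
          exact ih (insert v A) hcard' hvA (Finset.mem_insert_of_mem huA)
            (hSA.trans (Finset.subset_insert _ _))
            (Finset.insert_subset (Finset.mem_insert_of_mem hv.1) hAT)
    exact key ((T \ insert u S).card) (insert u S) le_rfl huS (Finset.mem_insert_self _ _)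
      (Finset.subset_insert _ _) (Finset.insert_subset_insert _ hST)
  · -- 1-extendible → exchange
    intro h1 A B hA hB hAB
    have key : ∀ n B, (A \ B).card ≤ n → I B → A.card < B.card →
        ∃ u ∈ B \ A, I (insert u A) := by
      intro n
      induction n with
      | zero =>
        intro B hc hB hAB
        have hsub : A ⊆ B := by
          intro x hx
          by_contra hxB
          have : x ∈ A \ B := Finset.mem_sdiff.mpr ⟨hx, hxB⟩
          have := Finset.card_pos.mpr ⟨x, this⟩
          omega
        obtain ⟨u, hu⟩ : (B \ A).Nonempty := by
          rw [← Finset.card_pos, Finset.card_sdiff_of_subset hsub]; omega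
        refine ⟨u, hu, ?_⟩
        rw [Finset.mem_sdiff] at hu
        exact hdown _ _ hB (Finset.insert_subset hu.1 hsub)
      | succ n ih =>
        intro B hc hB hAB
        by_cases hsub : A ⊆ B
        · obtain ⟨u, hu⟩ : (B \ A).Nonempty := by
            rw [← Finset.card_pos, Finset.card_sdiff_of_subset hsub]; omega
          refine ⟨u, hu, ?_⟩
          rw [Finset.mem_sdiff] at hu
          exact hdown _ _ hB (Finset.insert_subset hu.1 hsub)
        · obtain ⟨u, hu⟩ : (A \ B).Nonempty := Finset.sdiff_nonempty.mpr hsub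
          rw [Finset.mem_sdiff] at hu
          have hIint : I (A ∩ B) := hdown _ _ hA Finset.inter_subset_left
          have hIinsu : I (insert u (A ∩ B)) :=
            hdown _ _ hA (Finset.insert_subset hu.1 Finset.inter_subset_left)
          obtain ⟨Y, hYsub, hYcard, hY⟩ :=
            h1 (A ∩ B) B Finset.inter_subset_right hIint hB u hu.2 hIinsu
          have hYB : Y ⊆ B := hYsub.trans (Finset.sdiff_subset)
          have hYA : ∀ x ∈ Y, x ∉ A := by
            intro x hx
            have := hYsub hx
            rw [Finset.mem_sdiff, Finset.mem_inter] at this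
            exact fun hxA => this.2 ⟨hxA, this.1⟩
          set B' := insert u (B \ Y) with hB'
          have huB' : u ∈ B' := Finset.mem_insert_self _ _
          have hc' : (A \ B').card ≤ n := by
            have hsub2 : A \ B' ⊆ (A \ B).erase u := by
              intro x hx
              rw [Finset.mem_sdiff] at hx
              rw [hB', Finset.mem_insert, Finset.mem_sdiff] at hx
              push_neg at hx
              refine Finset.mem_erase.mpr ⟨hx.2.1, Finset.mem_sdiff.mpr ⟨hx.1, ?_⟩⟩
              intro hxB
              exact hYA x (hx.2.2 hxB) hx.1
            have := Finset.card_le_card hsub2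
            have := Finset.card_erase_of_mem (Finset.mem_sdiff.mpr hu)
            omega
          have hcardB' : A.card < B'.card := by
            have huBY : u ∉ B \ Y := fun h => hu.2 (Finset.mem_sdiff.mp h).1
            have : B'.card = (B \ Y).card + 1 := Finset.card_insert_of_notMem huBY
            have h2 : (B \ Y).card = B.card - Y.card := Finset.card_sdiff_of_subset hYB
            have := Finset.card_le_card hYB
            omega
          obtain ⟨v, hv, hvI⟩ := ih B' hc' hY hcardB'
          rw [Finset.mem_sdiff] at hv
          refine ⟨v, Finset.mem_sdiff.mpr ⟨?_, hv.2⟩, hvI⟩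
          rcases Finset.mem_insert.mp hv.1 with he | hm
          · exact absurd (he ▸ hu.1) hv.2
          · exact (Finset.mem_sdiff.mp hm).1
    exact key (A \ B).card B le_rfl hB hAB
end

section
/- A single knapsack constraint in which the ratio between the largest and smallest item sizes is at most k is a k-set system: for any budget W and sizes s: N → ℝ_{>0} with max s / min s ≤ k, the family I = {S ⊆ N : Σ_{u∈S} s(u) ≤ W} is an independence system in which, for every subset E ⊆ N, the sizes of any two maximal feasible subsets of E differ by a factor of at most k. -/
/-- A single knapsack constraint in which the ratio between the largest and
smallest item sizes is at most `k` is a `k`-set system: the family of subsets of total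
size at most `W` is down-closed, and for every `E ⊆ N` the sizes of any two maximal
feasible subsets of `E` differ by a factor of at most `k`. -/
theorem stmt_8 {α : Type*} [DecidableEq α] (N : Finset α) (s : α → ℝ)
    (hs : ∀ u ∈ N, 0 < s u) (k : ℕ) (hk : 1 ≤ k)
    (hratio : ∀ u ∈ N, ∀ v ∈ N, s u ≤ (k : ℝ) * s v)
    (W : ℝ) (hW : ∀ u ∈ N, s u ≤ W) :
    (∀ S T : Finset α, S ⊆ T → T ⊆ N → ∑ u ∈ T, s u ≤ W → ∑ u ∈ S, s u ≤ W) ∧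
    (∀ E ⊆ N, ∀ B₁ B₂ : Finset α, B₁ ⊆ E → B₂ ⊆ E →
      ∑ u ∈ B₁, s u ≤ W → ∑ u ∈ B₂, s u ≤ W →
      (∀ u ∈ E, u ∉ B₁ → ¬ (∑ v ∈ insert u B₁, s v ≤ W)) →
      (∀ u ∈ E, u ∉ B₂ → ¬ (∑ v ∈ insert u B₂, s v ≤ W)) →
      B₁.card ≤ k * B₂.card) := by
  constructor
  · intro S T hST hTN hT
    refine le_trans (Finset.sum_le_sum_of_subset_of_nonneg hST ?_) hT
    intro i hi _
    exact (hs i (hTN hi)).le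
  · intro E hE B₁ B₂ hB₁E hB₂E h1 h2 hmax1 hmax2
    by_cases hsub : B₁ ⊆ B₂
    · calc B₁.card ≤ B₂.card := Finset.card_le_card hsub
        _ ≤ k * B₂.card := Nat.le_mul_of_pos_left _ hk
    · obtain ⟨u, huB₁, huB₂⟩ := Finset.not_subset.1 hsub
      have huE : u ∈ E := hB₁E huB₁
      have huN : u ∈ N := hE huE
      obtain ⟨w, hwN, hwmin⟩ := N.exists_min_image s ⟨u, huN⟩
      have hm : 0 < s w := hs w hwN
      have hblock := hmax2 u huE huB₂
      rw [Finset.sum_insert huB₂] at hblock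
      push_neg at hblock
      have hsplit : s u + ∑ v ∈ B₁.erase u, s v = ∑ v ∈ B₁, s v :=
        Finset.add_sum_erase B₁ s huB₁
      have h3 : ∑ v ∈ B₁.erase u, s v < ∑ v ∈ B₂, s v := by linarith
      have hcardpos : 0 < B₁.card := Finset.card_pos.2 ⟨u, huB₁⟩
      have h4 : ((B₁.card : ℝ) - 1) * s w ≤ ∑ v ∈ B₁.erase u, s v := by
        have hle : ∀ v ∈ B₁.erase u, s w ≤ s v := fun v hv =>
          hwmin v (hE (hB₁E (Finset.mem_of_mem_erase hv)))
        calc ((B₁.card : ℝ) - 1) * s w = ((B₁.erase u).card : ℝ) * s w := by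
              rw [Finset.card_erase_of_mem huB₁]
              rw [Nat.cast_sub hcardpos]
              norm_num
          _ = ∑ _v ∈ B₁.erase u, s w := by rw [Finset.sum_const, nsmul_eq_mul]
          _ ≤ ∑ v ∈ B₁.erase u, s v := Finset.sum_le_sum hle
      have h5 : ∑ v ∈ B₂, s v ≤ ((k : ℝ) * B₂.card) * s w := by
        calc ∑ v ∈ B₂, s v ≤ ∑ _v ∈ B₂, (k : ℝ) * s w :=
              Finset.sum_le_sum fun v hv => hratio v (hE (hB₂E hv)) w hwN
          _ = ((k : ℝ) * B₂.card) * s w := by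
              rw [Finset.sum_const, nsmul_eq_mul]; ring
      have hfin : (B₁.card : ℝ) - 1 < (k : ℝ) * B₂.card := by
        have := lt_of_le_of_lt h4 (lt_of_lt_of_le h3 h5)
        exact lt_of_mul_lt_mul_right this hm.le
      have : (B₁.card : ℝ) < (k * B₂.card : ℕ) + 1 := by push_cast; linarith
      have := Nat.cast_lt (α := ℝ) (m := B₁.card) (n := k * B₂.card + 1) |>.1 (by exact_mod_cast this)
      omega
end

section
/- Let T_{i+1} ⊆ T_i be finite sets where T_i is a base (maximal independent set) of the restriction of a k-extendible system to ∪_{j≥i} C_j, C_i is independent, T_i \ T_{i+1} ⊆ C_i ∩ T_i, and |C_i| ≥ |O_i|/k for an independent set O_i of elements fed to the i-th greedy. Then k²·|T_{i+1}| + k·|T_i \ T_{i+1}| ≥ |O_i|. -/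
/-- arithmetic core of Lemma 6: if `k·|Tᵢ \ Cᵢ| ≥ |Cᵢ \ Tᵢ|`,
`|Cᵢ| ≥ |Oᵢ|/k`, `Tᵢ₊₁ ⊆ Tᵢ`, and `Tᵢ \ Tᵢ₊₁ ⊆ Cᵢ ∩ Tᵢ`, then
`k²·|Tᵢ₊₁| + k·|Tᵢ \ Tᵢ₊₁| ≥ |Oᵢ|`. -/
theorem stmt_10 {α : Type*} [DecidableEq α] (k : ℕ) (hk : 1 ≤ k)
    (Ti Tip1 Ci Oi : Finset α)
    (hgreedy : (Ci \ Ti).card ≤ k * (Ti \ Ci).card)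
    (happrox : Oi.card ≤ k * Ci.card)
    (hsub : Tip1 ⊆ Ti)
    (hdiff : Ti \ Tip1 ⊆ Ci ∩ Ti) :
    Oi.card ≤ k ^ 2 * Tip1.card + k * (Ti \ Tip1).card := by
  -- Tᵢ \ Cᵢ ⊆ Tᵢ₊₁
  have h1 : Ti \ Ci ⊆ Tip1 := by
    intro x hx
    simp only [Finset.mem_sdiff] at hx
    by_contra hxn
    have : x ∈ Ci ∩ Ti := hdiff (Finset.mem_sdiff.mpr ⟨hx.1, hxn⟩)
    exact hx.2 (Finset.mem_inter.mp this).1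
  -- Cᵢ ∩ Tᵢ ⊆ (Tᵢ \ Tᵢ₊₁) ∪ Tᵢ₊₁ ∩ Cᵢ
  have h2 : Ci ∩ Ti ⊆ (Ti \ Tip1) ∪ (Tip1 ∩ Ci) := by
    intro x hx
    simp only [Finset.mem_inter] at hx
    by_cases hxT : x ∈ Tip1
    · exact Finset.mem_union_right _ (Finset.mem_inter.mpr ⟨hxT, hx.1⟩)
    · exact Finset.mem_union_left _ (Finset.mem_sdiff.mpr ⟨hx.2, hxT⟩)
  have hCi : Ci.card = (Ci ∩ Ti).card + (Ci \ Ti).card :=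
    (Finset.card_inter_add_card_sdiff Ci Ti).symm
  have h2' : (Ci ∩ Ti).card ≤ (Ti \ Tip1).card + (Tip1 ∩ Ci).card :=
    le_trans (Finset.card_le_card h2) (Finset.card_union_le _ _)
  have h1' : (Ti \ Ci).card ≤ (Tip1 \ Ci).card := by
    apply Finset.card_le_card
    intro x hx
    exact Finset.mem_sdiff.mpr ⟨h1 hx, (Finset.mem_sdiff.mp hx).2⟩
  have hT : (Tip1 ∩ Ci).card + (Tip1 \ Ci).card = Tip1.card :=
    Finset.card_inter_add_card_sdiff Tip1 Ci
  have hkk : k ≤ k ^ 2 := by nlinarith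
  calc Oi.card ≤ k * Ci.card := happrox
    _ = k * (Ci ∩ Ti).card + k * (Ci \ Ti).card := by rw [hCi]; ring
    _ ≤ k * ((Ti \ Tip1).card + (Tip1 ∩ Ci).card) + k * (k * (Tip1 \ Ci).card) := by
        gcongr
        exact le_trans hgreedy (Nat.mul_le_mul_left k h1')
    _ = k * (Tip1 ∩ Ci).card + k ^ 2 * (Tip1 \ Ci).card + k * (Ti \ Tip1).card := by ring
    _ ≤ k ^ 2 * (Tip1 ∩ Ci).card + k ^ 2 * (Tip1 \ Ci).card + k * (Ti \ Tip1).card := by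
        gcongr
    _ = k ^ 2 * Tip1.card + k * (Ti \ Tip1).card := by rw [← hT]; ring
end

section
/- Suppose f: O → T is a function between finite sets with weight functions w such that (1) |f⁻¹(t)| ≤ k² for every t ∈ T, (2) |{u ∈ f⁻¹(t) : w(u) = w(t)}| ≤ k for every t ∈ T, (3) w(u) ≤ w(f(u)) for every u ∈ O, and (4) all weights are powers of k with k ≥ 2. Then w(O) ≤ 2k·w(T). -/
lemma pow_lt_aux {k : ℕ} (hk : 2 ≤ k) {i j : ℤ} (h : (k:ℝ) ^ i < (k:ℝ) ^ j) :
    (k:ℝ) ^ i ≤ (k:ℝ) ^ j / k := by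
  have hk1 : (1:ℝ) < k := by exact_mod_cast Nat.lt_of_lt_of_le one_lt_two hk
  have hij : i < j := (zpow_lt_zpow_iff_right₀ hk1).mp h
  have : (k:ℝ) ^ i ≤ (k:ℝ) ^ (j - 1) := by
    apply zpow_le_zpow_right₀ hk1.le (by omega)
  calc (k:ℝ) ^ i ≤ (k:ℝ) ^ (j - 1) := this
    _ = (k:ℝ) ^ j / k := by
        rw [zpow_sub₀ (by positivity), zpow_one]

open Classical in
/-- If `f : O → T` maps each element to an element of at least its weight,
each `t ∈ T` has at most `k²` preimages and at most `k` preimages of weight equal to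
`w t`, and all weights are powers of `k ≥ 2`, then `w(O) ≤ 2k·w(T)`. -/
theorem stmt_12 {γ : Type*} [DecidableEq γ] (O T : Finset γ) (f : γ → γ) (w : γ → ℝ)
    (k : ℕ) (hk : 2 ≤ k)
    (hpow : ∀ u ∈ O ∪ T, ∃ j : ℤ, w u = (k : ℝ) ^ j)
    (hf : ∀ u ∈ O, f u ∈ T)
    (h1 : ∀ t ∈ T, (O.filter (fun u => f u = t)).card ≤ k ^ 2)
    (h2 : ∀ t ∈ T, (O.filter (fun u => f u = t ∧ w u = w t)).card ≤ k)
    (h3 : ∀ u ∈ O, w u ≤ w (f u)) :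
    ∑ u ∈ O, w u ≤ 2 * k * ∑ t ∈ T, w t := by
  have hk0 : (0:ℝ) < k := by positivity
  rw [← Finset.sum_fiberwise_of_maps_to hf w, Finset.mul_sum]
  apply Finset.sum_le_sum
  intro t ht
  -- w t ≥ 0
  obtain ⟨jt, hjt⟩ := hpow t (Finset.mem_union_right _ ht)
  have hwt0 : 0 < w t := by rw [hjt]; positivity
  -- split fiber
  set A := O.filter (fun u => f u = t ∧ w u = w t) with hA
  set B := O.filter (fun u => f u = t ∧ w u ≠ w t) with hB
  have hsplit : O.filter (fun u => f u = t) = A ∪ B := by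
    ext u; simp only [hA, hB, Finset.mem_union, Finset.mem_filter]; tauto
  have hdisj : Disjoint A B := by
    rw [Finset.disjoint_left]
    intro u hu hu'
    simp only [hA, hB, Finset.mem_filter] at hu hu'
    exact hu'.2.2 hu.2.2
  rw [hsplit, Finset.sum_union hdisj]
  have hAsum : ∑ u ∈ A, w u ≤ k * w t := by
    calc ∑ u ∈ A, w u ≤ ∑ _u ∈ A, w t := by
          apply Finset.sum_le_sum
          intro u hu
          simp only [hA, Finset.mem_filter] at hu
          exact le_of_eq hu.2.2
      _ = A.card * w t := by rw [Finset.sum_const, nsmul_eq_mul]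
      _ ≤ k * w t := by
          apply mul_le_mul_of_nonneg_right _ hwt0.le
          exact_mod_cast h2 t ht
  have hBsum : ∑ u ∈ B, w u ≤ k * w t := by
    have key : ∀ u ∈ B, w u ≤ w t / k := by
      intro u hu
      simp only [hB, Finset.mem_filter] at hu
      obtain ⟨hO, hft, hne⟩ := hu
      obtain ⟨ju, hju⟩ := hpow u (Finset.mem_union_left _ hO)
      have hlt : w u < w t := lt_of_le_of_ne (hft ▸ h3 u hO) hne
      rw [hju, hjt] at hlt ⊢
      exact pow_lt_aux hk hlt
    calc ∑ u ∈ B, w u ≤ ∑ _u ∈ B, (w t / k) := Finset.sum_le_sum key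
      _ = B.card * (w t / k) := by rw [Finset.sum_const, nsmul_eq_mul]
      _ ≤ (k^2 : ℕ) * (w t / k) := by
          apply mul_le_mul_of_nonneg_right _ (by positivity)
          have hBsub : B ⊆ O.filter (fun u => f u = t) := by
            intro u hu
            simp only [hB, Finset.mem_filter] at hu ⊢
            exact ⟨hu.1, hu.2.1⟩
          exact_mod_cast (Finset.card_le_card hBsub).trans (h1 t ht)
      _ = k * w t := by push_cast; field_simp
  calc ∑ u ∈ A, w u + ∑ u ∈ B, w u ≤ k * w t + k * w t := add_le_add hAsum hBsum
    _ = 2 * k * w t := by ring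
end
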